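/- arXiv:1705.02160 — 2 statements merged into one kernel-verified Lean document; each statement's English description precedes it below -/
import Mathlib

section
/- The series defining the generalized k-Mittag-Leffler function E^{γ,q}_{k,α,β}(z) = Σ_{n=0}^∞ (γ)_{nq,k} z^n / (Γ_k(nα + β) · n!) converges absolutely for every z ∈ ℂ, provided k > 0, Re(α) > 0, Re(β) > 0, Re(γ) > 0, and q ∈ ℕ with q ≥ 1 and qk < Re(α) + k (in particular for q = 1). -/
open Finset

/-- The k-Pochhammer symbol `(γ)_{m,k} = ∏_{j=0}^{m-1} (γ + j k)`. -/
noncomputable def kPochhammer (x : ℂ) (k : ℝ) (m : ℕ) : ℂ :=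
  ∏ j ∈ Finset.range m, (x + (j : ℂ) * (k : ℂ))

/-- The k-gamma function `Γ_k(γ) = k^(γ/k - 1) Γ(γ/k)`. -/
noncomputable def kGamma (k : ℝ) (γ : ℂ) : ℂ :=
  (k : ℂ) ^ (γ / (k : ℂ) - 1) * Complex.Gamma (γ / (k : ℂ))

open Filter

lemma sum_inv_sq_le {x : ℝ} (hx : 1 ≤ x) (n : ℕ) :
    ∑ j ∈ range (n + 1), ((x + j) ^ 2)⁻¹ ≤ 2 / x := by
  have hx0 : 0 < x := lt_of_lt_of_le one_pos hx
  have key : ∀ m : ℕ, ∑ j ∈ range (m + 1), ((x + j) ^ 2)⁻¹ ≤ x⁻¹ ^ 2 + (x⁻¹ - (x + m)⁻¹) := by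
    intro m
    induction m with
    | zero => simp [sq]
    | succ m ih =>
      rw [Finset.sum_range_succ]
      have h1 : 0 < x + m := by positivity
      have h2 : 0 < x + ((m:ℝ) + 1) := by positivity
      have key2 : ((x + ((m:ℝ) + 1)) ^ 2)⁻¹ ≤ (x + m)⁻¹ - (x + ((m:ℝ) + 1))⁻¹ := by
        rw [inv_le_iff_one_le_mul₀ (by positivity)]
        have : (x + m)⁻¹ - (x + ((m:ℝ)+1))⁻¹ = ((x+m) * (x + ((m:ℝ)+1)))⁻¹ := by
          field_simp
          ring
        rw [this]
        rw [inv_mul_eq_div, le_div_iff₀ (by positivity)]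
        nlinarith
      push_cast at *
      linarith
  refine le_trans (key n) ?_
  have h3 : 0 < x + n := by positivity
  have hinv : x⁻¹ ≤ 1 := by
    rw [inv_le_one_iff₀]; right; exact hx
  have : x⁻¹ ^ 2 ≤ x⁻¹ := by
    rw [sq]
    nlinarith [inv_nonneg.mpr hx0.le]
  have h4 : (0:ℝ) < (x+n)⁻¹ := by positivity
  rw [div_eq_mul_inv, two_mul]
  linarith

lemma norm_Gamma_lower {s : ℂ} (hs : 1 ≤ s.re) :
    Real.Gamma s.re * Real.exp (-(s.im ^ 2 * (2 / s.re))) ≤ ‖Complex.Gamma s‖ := by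
  set x := s.re with hx
  set y := s.im with hy
  have hx0 : 0 < x := lt_of_lt_of_le one_pos hs
  set c : ℝ := y ^ 2 * (2 / x) with hc
  have hcnn : 0 ≤ c := by positivity
  refine le_of_tendsto_of_tendsto ((Real.GammaSeq_tendsto_Gamma x).mul_const (Real.exp (-c)))
    (Complex.GammaSeq_tendsto_Gamma s).norm ?_
  filter_upwards [eventually_ge_atTop 1] with n hn
  -- per-factor bound
  have hfac : ∀ j : ℕ, ‖s + (j:ℂ)‖ ≤ (x + j) * Real.exp (y ^ 2 * ((x + j) ^ 2)⁻¹) := by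
    intro j
    have hxj : 0 < x + j := by positivity
    set t : ℝ := y ^ 2 * ((x + j) ^ 2)⁻¹ with ht
    have htnn : 0 ≤ t := by positivity
    have h1 : ‖s + (j:ℂ)‖ ^ 2 = (x + j) ^ 2 + y ^ 2 := by
      rw [Complex.sq_norm, Complex.normSq_apply]
      simp [← hx, ← hy]
      ring
    have h2 : ((x + j) * Real.exp t) ^ 2 = (x + j) ^ 2 * Real.exp (2 * t) := by
      rw [mul_pow, ← Real.exp_nat_mul]; norm_num
    have h3 : (1 : ℝ) + 2 * t ≤ Real.exp (2 * t) := by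
      have := Real.add_one_le_exp (2 * t); linarith
    have h4 : ‖s + (j:ℂ)‖ ^ 2 ≤ ((x + j) * Real.exp t) ^ 2 := by
      rw [h1, h2]
      have : (x + j) ^ 2 * (1 + 2 * t) = (x + j) ^ 2 + 2 * y ^ 2 := by
        rw [ht]
        field_simp
      nlinarith [Real.exp_pos t, mul_le_mul_of_nonneg_left h3 (sq_nonneg (x + j))]
    exact (pow_le_pow_iff_left₀ (norm_nonneg _) (by positivity) two_ne_zero).mp h4
  have hQpos : ∀ j : ℕ, (0:ℝ) < ‖s + (j:ℂ)‖ := by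
    intro j
    have hre : (s + (j:ℂ)).re = x + j := by simp [← hx]
    have h5 : (0:ℝ) < x + j := by positivity
    calc (0:ℝ) < x + j := h5
      _ = (s + (j:ℂ)).re := hre.symm
      _ ≤ |(s + (j:ℂ)).re| := le_abs_self _
      _ ≤ ‖s + (j:ℂ)‖ := Complex.abs_re_le_norm _
  set P : ℝ := ∏ j ∈ range (n+1), (x + (j:ℝ)) with hPdef
  set Q : ℝ := ∏ j ∈ range (n+1), ‖s + (j:ℂ)‖ with hQdef
  have hP : 0 < P := Finset.prod_pos (fun j _ => by positivity)
  have hQ : 0 < Q := Finset.prod_pos (fun j _ => hQpos j)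
  have hQP : Q ≤ P * Real.exp c := by
    calc Q ≤ ∏ j ∈ range (n+1), ((x + j) * Real.exp (y ^ 2 * ((x + j) ^ 2)⁻¹)) := by
          apply Finset.prod_le_prod (fun j _ => (hQpos j).le) (fun j _ => hfac j)
      _ = P * Real.exp (∑ j ∈ range (n+1), y ^ 2 * ((x + j) ^ 2)⁻¹) := by
          rw [Finset.prod_mul_distrib, ← Real.exp_sum]
      _ ≤ P * Real.exp c := by
          apply mul_le_mul_of_nonneg_left _ hP.le
          apply Real.exp_le_exp.mpr
          rw [← Finset.mul_sum, hc]
          exact mul_le_mul_of_nonneg_left (sum_inv_sq_le hs n) (sq_nonneg y)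
  have hn0 : 0 < n := hn
  have hnormGS : ‖Complex.GammaSeq s n‖ = (n:ℝ) ^ x * (n.factorial : ℝ) / Q := by
    rw [Complex.GammaSeq, norm_div, norm_mul, Complex.norm_natCast_cpow_of_pos hn0]
    congr 1
    · congr 1
      simp
    · rw [hQdef, norm_prod]
  have hGSx : Real.GammaSeq x n = (n:ℝ) ^ x * (n.factorial : ℝ) / P := rfl
  rw [hnormGS, hGSx]
  have hN : (0:ℝ) ≤ (n:ℝ) ^ x * (n.factorial : ℝ) := by positivity
  calc (n:ℝ) ^ x * (n.factorial : ℝ) / P * Real.exp (-c)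
      = (n:ℝ) ^ x * (n.factorial : ℝ) / (P * Real.exp c) := by
        rw [Real.exp_neg, ← div_eq_mul_inv, div_div]
    _ ≤ (n:ℝ) ^ x * (n.factorial : ℝ) / Q := by
        apply div_le_div_of_nonneg_left hN hQ hQP

lemma kPochhammer_norm_le (γ : ℂ) {k : ℝ} (hk : 0 < k) (m : ℕ) :
    ‖kPochhammer γ k m‖ ≤ (‖γ‖ + k) ^ m * (m.factorial : ℝ) := by
  rw [kPochhammer, norm_prod]
  calc ∏ j ∈ range m, ‖γ + (j:ℂ) * (k:ℂ)‖
      ≤ ∏ j ∈ range m, ((‖γ‖ + k) * (j + 1)) := by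
        apply Finset.prod_le_prod (fun j _ => norm_nonneg _)
        intro j _
        calc ‖γ + (j:ℂ) * (k:ℂ)‖ ≤ ‖γ‖ + ‖(j:ℂ) * (k:ℂ)‖ := norm_add_le _ _
          _ = ‖γ‖ + j * k := by
              rw [norm_mul, Complex.norm_natCast, Complex.norm_real,
                Real.norm_of_nonneg hk.le]
          _ ≤ (‖γ‖ + k) * (j + 1) := by nlinarith [norm_nonneg γ, Nat.cast_nonneg (α := ℝ) j]
    _ = (‖γ‖ + k) ^ m * (m.factorial : ℝ) := by
        rw [Finset.prod_mul_distrib, Finset.prod_const, Finset.card_range]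
        congr 1
        rw [← Finset.prod_range_add_one_eq_factorial m]
        push_cast
        rfl

set_option maxHeartbeats 2000000 in
/-- Absolute convergence of the series defining the generalized k-Mittag-Leffler function. -/
theorem kMittagLeffler_summable (k : ℝ) (α β γ : ℂ) (q : ℕ) (z : ℂ)
    (hk : 0 < k) (hα : 0 < α.re) (hβ : 0 < β.re) (hγ : 0 < γ.re)
    (hq : 1 ≤ q) (hqk : (q : ℝ) * k < α.re + k) :
    Summable fun n : ℕ =>
      ‖kPochhammer γ k (n * q) * z ^ n / (kGamma k ((n : ℂ) * α + β) * (n.factorial : ℂ))‖ := by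
  set a : ℝ := α.re with ha
  set b : ℝ := β.re with hb
  set M : ℝ := ‖γ‖ + k with hM
  have hM0 : 0 < M := by positivity
  set D : ℝ := |α.im| + |β.im| with hD
  set C : ℝ := 2 * D ^ 2 / (k * a) with hC
  have hC0 : 0 ≤ C := by positivity
  set ε : ℝ := 1 + a / k - q with hε
  have hε0 : 0 < ε := by
    have : (q:ℝ) < a / k + 1 := by
      rw [div_add' _ _ _ hk.ne', lt_div_iff₀ hk]
      linarith
    simp only [hε]; linarith
  set B : ℝ := M ^ q * ‖z‖ * Real.exp C * (2:ℝ) ^ (1 + a / k) * k ^ (-(a / k)) with hB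
  have hB0 : 0 ≤ B := by positivity
  set T : ℝ := (B + 1) ^ (1 / ε) with hT
  have hT1 : 1 ≤ T := Real.one_le_rpow (by linarith) (by positivity)
  have hT0 : 0 < T := lt_of_lt_of_le one_pos hT1
  have hTε : T ^ ε = B + 1 := by
    rw [hT, ← Real.rpow_mul (by linarith : (0:ℝ) ≤ B + 1), one_div,
      inv_mul_cancel₀ hε0.ne', Real.rpow_one]
  set r : ℝ := B * T ^ (-ε) with hr
  have hr0 : 0 ≤ r := by positivity
  have hr1 : r < 1 := by
    rw [hr, Real.rpow_neg hT0.le, hTε]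
    rw [mul_inv_lt_iff₀ (by linarith)]
    linarith
  set A : ℝ := (k * k ^ (-(b / k)) * (2:ℝ) ^ (b / k)) * Real.exp T * T ^ (2 - b / k) with hA
  have hA0 : 0 ≤ A := by positivity
  apply Summable.of_norm_bounded_eventually (g := fun n => A * r ^ n)
    ((summable_geometric_of_lt_one hr0 hr1).mul_left A)
  rw [Nat.cofinite_eq_atTop]
  have htend : Tendsto (fun n : ℕ => ((n : ℝ) * a + b) / k) atTop atTop := by
    apply Tendsto.atTop_div_const hk
    apply tendsto_atTop_add_const_right
    exact (tendsto_natCast_atTop_atTop (R := ℝ)).atTop_mul_const hα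
  have htend2 : Tendsto (fun n : ℕ => ε * n) atTop atTop :=
    (tendsto_natCast_atTop_atTop (R := ℝ)).const_mul_atTop hε0
  filter_upwards [htend.eventually_ge_atTop 2, htend2.eventually_ge_atTop (2 - b / k),
    eventually_ge_atTop 1] with n hx2 hεn hn1
  set x : ℝ := ((n:ℝ) * a + b) / k with hxdef
  set w : ℂ := ((n:ℂ) * α + β) / (k:ℂ) with hwdef
  have hwre : w.re = x := by
    rw [hwdef, Complex.div_ofReal_re, hxdef]
    congr 2
    simp [ha, hb]
  have hwim : w.im = ((n:ℝ) * α.im + β.im) / k := by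
    rw [hwdef, Complex.div_ofReal_im]
    congr 1
    simp
  have hxsplit : x = (n:ℝ) * (a/k) + b/k := by rw [hxdef]; ring
  have hx0 : 0 < x := by linarith
  have hx1 : 1 ≤ x := by linarith
  set m : ℕ := ⌊x⌋₊ with hm
  have hm2 : 2 ≤ m := Nat.le_floor (by exact_mod_cast hx2)
  have hm1 : 1 ≤ m := le_trans one_le_two hm2
  have hmx : (m:ℝ) ≤ x := Nat.floor_le hx0.le
  have hxm : x - 1 < m := Nat.sub_one_lt_floor x
  set P : ℕ := n + (m - 1) with hP
  have hPr : (P:ℝ) = (n:ℝ) + m - 1 := by rw [hP]; push_cast [hm1]; ring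
  have hεn' : ε * n = (n:ℝ) + (n:ℝ) * (a/k) - (n:ℝ) * q := by rw [hε]; ring
  have hnq' : (n:ℝ) * q ≤ (n:ℝ) + x - 2 := by
    rw [hxsplit]; rw [hεn'] at hεn; linarith
  have hqknat : ((n*q : ℕ):ℝ) ≤ (P:ℝ) := by
    rw [hPr]; push_cast; linarith
  have hqP : n*q ≤ P := by exact_mod_cast hqknat
  set d : ℕ := P - n*q with hd
  have hdP : n*q + d = P := Nat.add_sub_cancel' hqP
  have hdr : ε * n - (2 - b/k) ≤ (d:ℝ) := by
    have h1 : (d:ℝ) = (P:ℝ) - (n*q : ℕ) := by rw [hd]; push_cast [hqP]; ring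
    rw [h1, hPr]; push_cast
    rw [hεn']
    rw [hxsplit] at hxm
    linarith
  -- factorial inequality
  have hnat : (n*q).factorial * d.factorial ≤ 2^P * (n.factorial * (m-1).factorial) := by
    have h1 : (n*q).factorial * d.factorial ≤ P.factorial := by
      rw [← hdP]
      exact Nat.le_of_dvd (Nat.factorial_pos _)
        (Nat.factorial_mul_factorial_dvd_factorial_add _ _)
    have hnP : n ≤ P := Nat.le_add_right _ _
    have h2 : P.factorial = Nat.choose P n * (n.factorial * (m-1).factorial) := by
      have h := Nat.choose_mul_factorial_mul_factorial hnP
      have hPn : P - n = m - 1 := by rw [hP]; omega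
      rw [← h, hPn, Nat.mul_assoc]
    have h3 : Nat.choose P n ≤ 2^P := by
      calc Nat.choose P n ≤ ∑ i ∈ range (P+1), Nat.choose P i :=
            Finset.single_le_sum (fun i _ => Nat.zero_le _)
              (Finset.mem_range.mpr (Nat.lt_succ_of_le hnP))
        _ = 2^P := Nat.sum_range_choose P
    calc (n*q).factorial * d.factorial ≤ P.factorial := h1
      _ = Nat.choose P n * (n.factorial * (m-1).factorial) := h2
      _ ≤ 2^P * (n.factorial * (m-1).factorial) := by
          exact Nat.mul_le_mul_right _ h3
  -- Gamma lower bounds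
  have hΓw : Real.Gamma x * Real.exp (-(C * n)) ≤ ‖Complex.Gamma w‖ := by
    have h1 := norm_Gamma_lower (s := w) (by rw [hwre]; linarith)
    rw [hwre] at h1
    refine le_trans ?_ h1
    apply mul_le_mul_of_nonneg_left _ (Real.Gamma_pos_of_pos hx0).le
    apply Real.exp_le_exp.mpr
    apply neg_le_neg
    have him : |w.im| ≤ (n:ℝ) * D / k := by
      rw [hwim, abs_div, abs_of_pos hk]
      gcongr
      calc |(n:ℝ) * α.im + β.im| ≤ |(n:ℝ) * α.im| + |β.im| := abs_add_le _ _
        _ = (n:ℝ) * |α.im| + |β.im| := by rw [abs_mul, Nat.abs_cast]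
        _ ≤ (n:ℝ) * D := by
            rw [hD, mul_add]
            have hn1' : (1:ℝ) ≤ n := by exact_mod_cast hn1
            have h9 : |β.im| ≤ (n:ℝ) * |β.im| :=
              le_mul_of_one_le_left (abs_nonneg _) hn1'
            linarith
    have h2 : w.im^2 ≤ ((n:ℝ) * D / k)^2 := by
      rw [← sq_abs w.im]
      apply pow_le_pow_left₀ (abs_nonneg _) him
    have hnapos : 0 < (n:ℝ) * a / k := by
      have hn1' : (0:ℝ) < n := by exact_mod_cast hn1
      positivity
    have h3 : 2/x ≤ 2 / ((n:ℝ) * a / k) := by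
      apply div_le_div_of_nonneg_left (by norm_num) hnapos
      rw [hxsplit]
      have : (0:ℝ) < b/k := by positivity
      have : (n:ℝ) * a / k = (n:ℝ) * (a/k) := by ring
      linarith
    calc w.im ^ 2 * (2/x) ≤ ((n:ℝ) * D / k)^2 * (2 / ((n:ℝ) * a / k)) := by
          apply mul_le_mul h2 h3 (by positivity) (by positivity)
      _ = C * n := by
          rw [hC]
          have hn0' : (n:ℝ) ≠ 0 := by
            have : (0:ℝ) < n := by exact_mod_cast hn1
            exact this.ne'
          field_simp
  have hΓx : (((m-1).factorial:ℝ)) ≤ Real.Gamma x := by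
    have he : Real.Gamma ((m:ℝ)) = ((m-1).factorial : ℝ) := by
      have hcast : (m:ℝ) = ((m-1 : ℕ):ℝ) + 1 := by push_cast [hm1]; ring
      rw [hcast, Real.Gamma_nat_eq_factorial]
    rw [← he]
    exact Real.Gamma_strictMonoOn_Ici.monotoneOn
      (Set.mem_Ici.mpr (by exact_mod_cast hm2)) (Set.mem_Ici.mpr hx2) hmx
  -- denominator
  have hkGamma : kGamma k ((n:ℂ)*α + β) = (k:ℂ)^(w - 1) * Complex.Gamma w := by
    rw [kGamma, ← hwdef]
  have hden : ‖kGamma k ((n:ℂ)*α + β) * ((n.factorial:ℕ) : ℂ)‖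
      = k ^ (x-1) * ‖Complex.Gamma w‖ * (n.factorial : ℝ) := by
    rw [norm_mul, hkGamma, norm_mul, Complex.norm_natCast]
    congr 2
    rw [Complex.norm_cpow_eq_rpow_re_of_pos hk]
    congr 1
    rw [Complex.sub_re, Complex.one_re, hwre]
  have hΓw0 : Complex.Gamma w ≠ 0 :=
    Complex.Gamma_ne_zero_of_re_pos (by rw [hwre]; exact hx0)
  have hΓwpos : 0 < ‖Complex.Gamma w‖ := norm_pos_iff.mpr hΓw0
  -- numerator
  have hnum : ‖kPochhammer γ k (n*q) * z^n‖ ≤ M^(n*q) * (((n*q).factorial:ℕ):ℝ) * ‖z‖^n := by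
    rw [norm_mul, norm_pow]
    exact mul_le_mul_of_nonneg_right (kPochhammer_norm_le γ hk (n*q)) (by positivity)
  -- rpow helper facts
  have hkinv : (k ^ (x-1))⁻¹ = k * k^(-(b/k)) * (k^(-(a/k)))^n := by
    have h1 : (k ^ (x-1))⁻¹ = k ^ (1 - x) := by
      rw [← Real.rpow_neg hk.le]; ring_nf
    have h2 : (1 : ℝ) - x = 1 + (-(b/k)) + (-(a/k)) * (n:ℝ) := by rw [hxsplit]; ring
    rw [h1, h2, Real.rpow_add hk, Real.rpow_add hk, Real.rpow_one,
      Real.rpow_mul hk.le, Real.rpow_natCast]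
  have h2P : ((2:ℝ))^P ≤ 2^(b/k) * ((2:ℝ)^(1 + a/k))^n := by
    have hle : ((P:ℝ)) ≤ b/k + (1 + a/k) * (n:ℝ) := by
      rw [hPr]
      rw [hxsplit] at hmx
      have : (1 + a/k) * (n:ℝ) = (n:ℝ) + (n:ℝ) * (a/k) := by ring
      linarith
    calc ((2:ℝ))^P = (2:ℝ)^((P:ℝ)) := (Real.rpow_natCast 2 P).symm
      _ ≤ (2:ℝ)^(b/k + (1 + a/k)*(n:ℝ)) :=
          Real.rpow_le_rpow_of_exponent_le one_le_two hle
      _ = 2^(b/k) * ((2:ℝ)^(1 + a/k))^n := by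
          rw [Real.rpow_add two_pos, Real.rpow_mul (by norm_num : (0:ℝ) ≤ 2),
            Real.rpow_natCast]
  have hdinv : ((d.factorial:ℝ))⁻¹ ≤ Real.exp T * (T^(2 - b/k) * (T^(-ε))^n) := by
    have hTd : T^d ≤ Real.exp T * (d.factorial : ℝ) := by
      have h1 : T^d / (d.factorial:ℝ) ≤ Real.exp T := by
        calc T^d / (d.factorial:ℝ)
            ≤ ∑ i ∈ range (d+1), T^i / (i.factorial:ℝ) :=
              Finset.single_le_sum (f := fun i => T^i/(i.factorial:ℝ))
                (fun i _ => by positivity) (Finset.self_mem_range_succ d)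
          _ ≤ Real.exp T := Real.sum_le_exp_of_nonneg hT0.le _
      rw [div_le_iff₀ (by positivity)] at h1
      linarith
    have h2 : ((d.factorial:ℝ))⁻¹ ≤ Real.exp T * (T^d)⁻¹ := by
      rw [← one_div, ← div_eq_mul_inv, div_le_div_iff₀ (by positivity) (by positivity)]
      linarith
    have h3 : ((T^d : ℝ))⁻¹ = T^(-(d:ℝ)) := by
      rw [← Real.rpow_natCast T d, ← Real.rpow_neg hT0.le]
    have h4 : T^(-(d:ℝ)) ≤ T^(2 - b/k) * (T^(-ε))^n := by
      have hexp : -(d:ℝ) ≤ (2 - b/k) + (-ε)*(n:ℝ) := by linarith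
      calc T^(-(d:ℝ)) ≤ T^((2 - b/k) + (-ε)*(n:ℝ)) :=
            Real.rpow_le_rpow_of_exponent_le hT1 hexp
        _ = T^(2-b/k) * (T^(-ε))^n := by
            rw [Real.rpow_add hT0, Real.rpow_mul hT0.le, Real.rpow_natCast]
    calc ((d.factorial:ℝ))⁻¹ ≤ Real.exp T * (T^d)⁻¹ := h2
      _ = Real.exp T * T^(-(d:ℝ)) := by rw [h3]
      _ ≤ Real.exp T * (T^(2 - b/k) * (T^(-ε))^n) :=
          mul_le_mul_of_nonneg_left h4 (Real.exp_pos T).le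
  -- main chain
  have hfmne : (((m-1).factorial : ℕ):ℝ) ≠ 0 := by positivity
  have hfnne : ((n.factorial : ℕ):ℝ) ≠ 0 := by positivity
  have hfdne : ((d.factorial : ℕ):ℝ) ≠ 0 := by positivity
  have hkx : (0:ℝ) < k ^ (x-1) := Real.rpow_pos_of_pos hk _
  have hnatR : (((n*q).factorial:ℕ):ℝ)
      ≤ 2^P * (n.factorial:ℝ) * ((m-1).factorial:ℝ) / (d.factorial:ℝ) := by
    rw [le_div_iff₀ (by positivity)]
    calc (((n*q).factorial:ℕ):ℝ) * (d.factorial:ℝ)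
        = (((n*q).factorial * d.factorial : ℕ):ℝ) := by push_cast; ring
      _ ≤ ((2^P * (n.factorial * (m-1).factorial) : ℕ):ℝ) := by exact_mod_cast hnat
      _ = 2^P * (n.factorial:ℝ) * ((m-1).factorial:ℝ) := by push_cast; ring
  rw [Real.norm_of_nonneg (norm_nonneg _), norm_div, hden]
  calc ‖kPochhammer γ k (n*q) * z^n‖ / (k ^ (x-1) * ‖Complex.Gamma w‖ * (n.factorial:ℝ))
      ≤ (M^(n*q) * (((n*q).factorial:ℕ):ℝ) * ‖z‖^n)
        / (k ^ (x-1) * (((m-1).factorial:ℝ) * Real.exp (-(C*(n:ℝ)))) * (n.factorial:ℝ)) := by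
        apply div_le_div₀ (by positivity) hnum (by positivity)
        gcongr
        calc ((m-1).factorial:ℝ) * Real.exp (-(C*(n:ℝ)))
            ≤ Real.Gamma x * Real.exp (-(C*(n:ℝ))) :=
              mul_le_mul_of_nonneg_right hΓx (Real.exp_pos _).le
          _ ≤ ‖Complex.Gamma w‖ := hΓw
    _ ≤ (M^(n*q) * (2^P * (n.factorial:ℝ) * ((m-1).factorial:ℝ) / (d.factorial:ℝ)) * ‖z‖^n)
        / (k ^ (x-1) * (((m-1).factorial:ℝ) * Real.exp (-(C*(n:ℝ)))) * (n.factorial:ℝ)) := by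
        gcongr
    _ = M^(n*q) * ‖z‖^n * (2:ℝ)^P * Real.exp (C*(n:ℝ)) * (k ^ (x-1))⁻¹
        * ((d.factorial:ℝ))⁻¹ := by
        rw [Real.exp_neg]
        field_simp
    _ ≤ (M^q)^n * ‖z‖^n * (2^(b/k) * ((2:ℝ)^(1 + a/k))^n) * (Real.exp C)^n
        * (k * k^(-(b/k)) * (k^(-(a/k)))^n)
        * (Real.exp T * (T^(2 - b/k) * (T^(-ε))^n)) := by
        rw [pow_mul', hkinv, mul_comm C ((n:ℝ)), Real.exp_nat_mul]
        gcongr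
    _ = A * r^n := by
        rw [hA, hr, mul_pow, mul_pow, mul_pow, mul_pow]
        ring
end

section
/- For ν > 0, the function t ↦ Σ_{k=0}^∞ (-1)^k (ct)^{νk} / Γ(νk + 1) (i.e., t ↦ E_ν(-(ct)^ν)), multiplied by N₀, satisfies the fractional integral equation N(t) - N₀ = -c^ν · (₀D_t^{-ν} N)(t) for t > 0, where ₀D_t^{-ν} is the Riemann–Liouville fractional integral. -/
open MeasureTheory intervalIntegral

lemma beta_real {u v t : ℝ} (hu : 0 < u) (hv : 0 < v) (ht : 0 < t) :
    ∫ s in (0:ℝ)..t, s ^ (u-1) * (t - s) ^ (v-1) =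
      t ^ (u+v-1) * (Real.Gamma u * Real.Gamma v / Real.Gamma (u+v)) := by
  have h := Complex.betaIntegral_scaled (u:ℂ) (v:ℂ) ht
  have hG : Complex.Gamma (u+v) ≠ 0 := by
    rw [(by push_cast; ring : ((u:ℂ)+v) = ((u+v:ℝ):ℂ)), Complex.Gamma_ofReal]
    exact_mod_cast (Real.Gamma_pos_of_pos (by linarith)).ne'
  have hB : Complex.betaIntegral u v = Complex.Gamma u * Complex.Gamma v / Complex.Gamma ((u:ℂ)+v) := by
    field_simp
    rw [mul_comm]
    exact (Complex.Gamma_mul_Gamma_eq_betaIntegral (by simpa using hu) (by simpa using hv)).symm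
  rw [hB] at h
  have hL : (∫ x in (0:ℝ)..t, (x : ℂ) ^ ((u:ℂ) - 1) * ((t : ℂ) - x) ^ ((v:ℂ) - 1))
      = ((∫ s in (0:ℝ)..t, s ^ (u-1) * (t - s) ^ (v-1) : ℝ) : ℂ) := by
    rw [← intervalIntegral.integral_ofReal]
    refine intervalIntegral.integral_congr fun x hx => ?_
    rw [Set.uIcc_of_le ht.le] at hx
    rw [Complex.ofReal_mul, Complex.ofReal_cpow hx.1, Complex.ofReal_cpow (by linarith [hx.2] : (0:ℝ) ≤ t - x)]
    push_cast
    ring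
  rw [hL] at h
  have hR : ((t:ℂ)) ^ ((u:ℂ) + v - 1) * (Complex.Gamma u * Complex.Gamma v / Complex.Gamma ((u:ℂ)+v))
      = ((t ^ (u+v-1) * (Real.Gamma u * Real.Gamma v / Real.Gamma (u+v)) : ℝ) : ℂ) := by
    rw [(by push_cast; ring : ((u:ℂ)+v-1) = ((u+v-1:ℝ):ℂ)), ← Complex.ofReal_cpow ht.le,
      (by push_cast; ring : ((u:ℂ)+v) = ((u+v:ℝ):ℂ)), Complex.Gamma_ofReal,
      Complex.Gamma_ofReal, Complex.Gamma_ofReal]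
    push_cast
    ring
  rw [hR] at h
  exact_mod_cast h



lemma gamma_ratio_ge (ν M : ℝ) (hν : 0 < ν) (hM : 0 < M) :
    ∃ Y : ℝ, ∀ y : ℝ, Y ≤ y → M * Real.Gamma y ≤ Real.Gamma (y + ν) := by
  rcases le_or_gt ν 1 with hν1 | hν1
  · refine ⟨max 2 (max ν ((2*M) ^ (1/ν))), fun y hy => ?_⟩
    have hy2 : (2:ℝ) ≤ y := le_trans (le_max_left _ _) hy
    have hyν : ν ≤ y := le_trans (le_trans (le_max_left _ _) (le_max_right _ _)) hy
    have hyM : (2*M) ^ (1/ν) ≤ y := le_trans (le_trans (le_max_right _ _) (le_max_right _ _)) hy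
    have hy0 : (0:ℝ) < y := by linarith
    have hΓy : 0 < Real.Gamma y := Real.Gamma_pos_of_pos hy0
    have hyν0 : (0:ℝ) < y + ν := by linarith
    -- convexity step : Gamma (y+1) ≤ Gamma (y+ν) * (y+ν)^(1-ν)
    have hconv : Real.Gamma (y + 1) ≤ Real.Gamma (y + ν) * (y + ν) ^ (1 - ν) := by
      rcases eq_or_lt_of_le hν1 with h1 | h1
      · simp [h1, Real.rpow_zero]
      have hcv := Real.convexOn_log_Gamma.2 (Set.mem_Ioi.mpr hyν0)
        (Set.mem_Ioi.mpr (by linarith : (0:ℝ) < y + ν + 1)) hν.le (by linarith : (0:ℝ) ≤ 1 - ν)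
        (by ring)
      have he : ν • (y + ν) + (1 - ν) • (y + ν + 1) = y + 1 := by
        simp only [smul_eq_mul]; ring
      rw [he] at hcv
      simp only [Function.comp, smul_eq_mul] at hcv
      rw [Real.Gamma_add_one hyν0.ne', Real.log_mul hyν0.ne'
        (Real.Gamma_pos_of_pos hyν0).ne'] at hcv
      have hcv2 : Real.log (Real.Gamma (y+1)) ≤
          Real.log (Real.Gamma (y+ν)) + Real.log (y+ν) * (1-ν) := by nlinarith
      have := Real.exp_le_exp.mpr hcv2
      rwa [Real.exp_log (Real.Gamma_pos_of_pos (by linarith)), Real.exp_add,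
        Real.exp_log (Real.Gamma_pos_of_pos hyν0),
        ← Real.rpow_def_of_pos hyν0] at this
    -- M * (y+ν)^(1-ν) ≤ y
    have hMy : M * (y + ν) ^ (1 - ν) ≤ y := by
      have h2M : 2 * M ≤ y ^ ν := by
        have h := Real.rpow_le_rpow (Real.rpow_nonneg (by positivity) _) hyM hν.le
        rwa [← Real.rpow_mul (by positivity : (0:ℝ) ≤ 2*M), one_div,
          inv_mul_cancel₀ hν.ne', Real.rpow_one] at h
      have hb : (y + ν) ^ (1 - ν) ≤ 2 * y ^ (1 - ν) := by
        calc (y + ν) ^ (1 - ν) ≤ (2*y) ^ (1 - ν) :=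
              Real.rpow_le_rpow hyν0.le (by linarith) (by linarith)
          _ = 2 ^ (1-ν) * y ^ (1-ν) := Real.mul_rpow (by norm_num) hy0.le
          _ ≤ 2 * y ^ (1 - ν) := by
              have : (2:ℝ) ^ (1-ν) ≤ 2 ^ (1:ℝ) :=
                Real.rpow_le_rpow_of_exponent_le (by norm_num) (by linarith)
              simpa [Real.rpow_one] using
                mul_le_mul_of_nonneg_right this (Real.rpow_nonneg hy0.le _)
      calc M * (y + ν) ^ (1 - ν) ≤ M * (2 * y ^ (1-ν)) :=
            mul_le_mul_of_nonneg_left hb hM.le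
        _ = (2*M) * y ^ (1-ν) := by ring
        _ ≤ y ^ ν * y ^ (1-ν) := mul_le_mul_of_nonneg_right h2M (Real.rpow_nonneg hy0.le _)
        _ = y := by rw [← Real.rpow_add hy0]; simp
    have h1 : M * Real.Gamma y * (y + ν) ^ (1-ν) ≤ y * Real.Gamma y := by
      calc M * Real.Gamma y * (y + ν) ^ (1-ν) = (M * (y+ν) ^ (1-ν)) * Real.Gamma y := by ring
        _ ≤ y * Real.Gamma y := mul_le_mul_of_nonneg_right hMy hΓy.le
    have h2 : y * Real.Gamma y ≤ Real.Gamma (y + ν) * (y + ν) ^ (1-ν) := by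
      rw [← Real.Gamma_add_one hy0.ne']; exact hconv
    have hpow : (0:ℝ) < (y + ν) ^ (1-ν) := Real.rpow_pos_of_pos hyν0 _
    exact le_of_mul_le_mul_right (le_trans h1 h2) hpow
  · refine ⟨max 2 M, fun y hy => ?_⟩
    have hy2 : (2:ℝ) ≤ y := le_trans (le_max_left _ _) hy
    have hyM : M ≤ y := le_trans (le_max_right _ _) hy
    have hΓy : 0 < Real.Gamma y := Real.Gamma_pos_of_pos (by linarith)
    calc M * Real.Gamma y ≤ y * Real.Gamma y := mul_le_mul_of_nonneg_right hyM hΓy.le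
      _ = Real.Gamma (y + 1) := (Real.Gamma_add_one (by linarith)).symm
      _ ≤ Real.Gamma (y + ν) := Real.Gamma_strictMonoOn_Ici.monotoneOn
          (by simp [Set.mem_Ici]; linarith) (by simp [Set.mem_Ici]; linarith) (by linarith)

lemma summable_ml (ν b x : ℝ) (hν : 0 < ν) (hb : 0 < b) (hx : 0 ≤ x) :
    Summable (fun k : ℕ => x ^ k / Real.Gamma (ν * k + b)) := by
  obtain ⟨Y, hY⟩ := gamma_ratio_ge ν (2*x+1) hν (by linarith)
  obtain ⟨K, hK⟩ := exists_nat_ge ((Y - b)/ν)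
  apply summable_of_ratio_norm_eventually_le (r := x/(2*x+1))
  · rw [div_lt_one (by linarith)]; linarith
  · filter_upwards [Filter.eventually_ge_atTop K] with k hk
    have hyk : Y ≤ ν * k + b := by
      have h1 : Y - b ≤ ν * k := by
        calc Y - b = ν * ((Y-b)/ν) := by field_simp
          _ ≤ ν * K := mul_le_mul_of_nonneg_left hK hν.le
          _ ≤ ν * k := mul_le_mul_of_nonneg_left (Nat.cast_le.mpr hk) hν.le
      linarith
    have hG := hY _ hyk
    have hΓ1 : 0 < Real.Gamma (ν * k + b) := Real.Gamma_pos_of_pos (by positivity)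
    have hΓ2 : 0 < Real.Gamma (ν * k + b + ν) := Real.Gamma_pos_of_pos (by positivity)
    have he : ν * ((k : ℝ) + 1) + b = ν * k + b + ν := by ring
    rw [Real.norm_of_nonneg (by positivity), Real.norm_of_nonneg (by positivity)]
    push_cast [he]
    rw [div_mul_div_comm, div_le_div_iff₀ hΓ2 (by positivity), pow_succ, mul_comm (x^k) x]
    exact mul_le_mul_of_nonneg_left hG (by positivity)


/-- Riemann–Liouville fractional integral of order ν. -/
noncomputable def rlInt (ν : ℝ) (f : ℝ → ℝ) (t : ℝ) : ℝ :=
  (1 / Real.Gamma ν) * ∫ s in (0 : ℝ)..t, (t - s) ^ (ν - 1) * f s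

theorem mittagLeffler_solves_kinetic (ν c N₀ : ℝ) (hν : 0 < ν) (hc : 0 < c)
    (N : ℝ → ℝ)
    (hN : ∀ t : ℝ, N t = N₀ * ∑' k : ℕ, (-1) ^ k * (c * t) ^ (ν * k) / Real.Gamma (ν * k + 1)) :
    ∀ t : ℝ, 0 < t → N t - N₀ = -(c ^ ν) * rlInt ν N t := by
  intro t ht
  have hΓν : 0 < Real.Gamma ν := Real.Gamma_pos_of_pos hν
  have hct : 0 < c * t := mul_pos hc ht
  set X : ℝ := (c*t) ^ ν with hX
  have hX0 : 0 < X := Real.rpow_pos_of_pos hct ν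
  set a : ℕ → ℝ := fun k => (-1)^k * (c*t)^(ν*k) / Real.Gamma (ν*(k:ℕ)+1) with ha
  have hpowX : ∀ k : ℕ, (c*t)^(ν*(k:ℕ)) = X^k := by
    intro k
    rw [hX, ← Real.rpow_natCast ((c*t)^ν) k, ← Real.rpow_mul hct.le]
  have hnorm_a : ∀ k : ℕ, ‖a k‖ = X^k / Real.Gamma (ν*(k:ℕ)+1) := by
    intro k
    have hΓ : 0 < Real.Gamma (ν*(k:ℕ)+1) := Real.Gamma_pos_of_pos (by positivity)
    rw [ha]
    simp only [norm_div, norm_mul, norm_pow, norm_neg, norm_one, one_pow, one_mul,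
      Real.norm_of_nonneg (Real.rpow_nonneg hct.le _), Real.norm_of_nonneg hΓ.le, hpowX k]
    rw [Real.norm_of_nonneg hX0.le]
  have hsum_a : Summable a :=
    Summable.of_norm (((summable_ml ν 1 X hν one_pos hX0.le).congr
      (fun k => (hnorm_a k).symm)))
  set Cf : ℕ → ℝ := fun k => N₀ * ((-1)^k * c^(ν*(k:ℕ)) / Real.Gamma (ν*(k:ℕ)+1)) with hCf
  set F : ℕ → ℝ → ℝ := fun k s => Cf k * ((t-s)^(ν-1) * s^(ν*(k:ℕ))) with hF
  -- integrability
  have hbase : IntervalIntegrable (fun s => (t-s)^(ν-1)) volume 0 t := by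
    have h0 : IntervalIntegrable (fun s : ℝ => s^(ν-1)) volume 0 t :=
      intervalIntegral.intervalIntegrable_rpow' (by linarith)
    have h1 := h0.comp_sub_left t
    simp only [sub_zero, sub_self] at h1
    exact h1.symm
  have hcont : ∀ k : ℕ, Continuous (fun s : ℝ => s ^ (ν * (k:ℕ))) := fun k =>
    continuous_iff_continuousAt.mpr fun s =>
      Real.continuousAt_rpow_const s _ (Or.inr (by positivity))
  have hFint : ∀ k, IntervalIntegrable (F k) volume 0 t := fun k =>
    (hbase.mul_continuousOn (hcont k).continuousOn).const_mul (Cf k)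
  -- beta integral values
  have hJ : ∀ k : ℕ, ∫ s in (0:ℝ)..t, (t-s)^(ν-1) * s^(ν*(k:ℕ))
      = t^(ν*(k:ℕ)+ν) * (Real.Gamma (ν*(k:ℕ)+1) * Real.Gamma ν / Real.Gamma (ν*(k:ℕ)+1+ν)) := by
    intro k
    have hb := beta_real (u := ν*(k:ℕ)+1) (v := ν) (by positivity) hν ht
    simp only [show (ν*(k:ℕ)+1-1 : ℝ) = ν*(k:ℕ) from by ring,
      show (ν*(k:ℕ)+1+ν-1 : ℝ) = ν*(k:ℕ)+ν from by ring] at hb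
    rw [← hb]
    exact intervalIntegral.integral_congr fun s _ => mul_comm _ _
  -- norm integrals
  have hInorm : ∀ k : ℕ, ∫ s in Set.Ioc (0:ℝ) t, ‖F k s‖ =
      (|N₀| * Real.Gamma ν * t^ν) * (X^k / Real.Gamma (ν*(k:ℕ)+(ν+1))) := by
    intro k
    have hΓ : 0 < Real.Gamma (ν*(k:ℕ)+1) := Real.Gamma_pos_of_pos (by positivity)
    have h1 : ∀ s ∈ Set.Ioc (0:ℝ) t, ‖F k s‖ = |Cf k| * ((t-s)^(ν-1) * s^(ν*(k:ℕ))) := by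
      intro s hs
      rw [hF]
      simp only [norm_mul]
      rw [Real.norm_of_nonneg (Real.rpow_nonneg (sub_nonneg.2 hs.2) _),
        Real.norm_of_nonneg (Real.rpow_nonneg hs.1.le _)]
      rfl
    rw [setIntegral_congr_fun measurableSet_Ioc h1, MeasureTheory.integral_const_mul,
      ← intervalIntegral.integral_of_le ht.le, hJ k]
    have hCabs : |Cf k| = |N₀| * (c^(ν*(k:ℕ)) / Real.Gamma (ν*(k:ℕ)+1)) := by
      rw [hCf]
      simp only [abs_mul, abs_div, abs_pow, abs_neg, abs_one, one_pow, one_mul,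
        abs_of_nonneg (Real.rpow_nonneg hc.le _), abs_of_nonneg hΓ.le]
    rw [hCabs]
    have e1 : t^(ν*(k:ℕ)+ν) = t^(ν*(k:ℕ)) * t^ν := Real.rpow_add ht _ _
    have e2 : c^(ν*(k:ℕ)) * t^(ν*(k:ℕ)) = X^k := by
      rw [← Real.mul_rpow hc.le ht.le, hpowX k]
    have e3 : Real.Gamma (ν*(k:ℕ)+1+ν) = Real.Gamma (ν*(k:ℕ)+(ν+1)) := by ring_nf
    have hΓ2 : Real.Gamma (ν*(k:ℕ)+(ν+1)) ≠ 0 :=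
      (Real.Gamma_pos_of_pos (by positivity)).ne'
    rw [e1, e3]
    field_simp
    rw [← e2]
    ring
  have hFnorm_sum : Summable (fun k => ∫ s in Set.Ioc (0:ℝ) t, ‖F k s‖) :=
    (((summable_ml ν (ν+1) X hν (by linarith) hX0.le).mul_left
      (|N₀| * Real.Gamma ν * t^ν))).congr (fun k => (hInorm k).symm)
  have hswap := MeasureTheory.integral_tsum_of_summable_integral_norm
    (fun k => (hFint k).1) hFnorm_sum
  have hptwise : ∀ s ∈ Set.Ioc (0:ℝ) t, (t-s)^(ν-1) * N s = ∑' k, F k s := by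
    intro s hs
    rw [hN s]
    calc (t-s)^(ν-1) * (N₀ * ∑' k : ℕ, (-1)^k * (c*s)^(ν*(k:ℕ)) / Real.Gamma (ν*(k:ℕ)+1))
        = ((t-s)^(ν-1) * N₀) * ∑' k : ℕ, (-1)^k * (c*s)^(ν*(k:ℕ)) / Real.Gamma (ν*(k:ℕ)+1) := by
          ring
      _ = ∑' k : ℕ, ((t-s)^(ν-1) * N₀) * ((-1)^k * (c*s)^(ν*(k:ℕ)) / Real.Gamma (ν*(k:ℕ)+1)) :=
          tsum_mul_left.symm
      _ = ∑' k, F k s := by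
          refine tsum_congr fun k => ?_
          rw [hF, hCf]
          simp only []
          rw [Real.mul_rpow hc.le hs.1.le]
          ring
  have hintN : ∫ s in (0:ℝ)..t, (t-s)^(ν-1) * N s
      = ∑' k : ℕ, Cf k * (t^(ν*(k:ℕ)+ν) *
          (Real.Gamma (ν*(k:ℕ)+1) * Real.Gamma ν / Real.Gamma (ν*(k:ℕ)+1+ν))) := by
    rw [intervalIntegral.integral_of_le ht.le,
      setIntegral_congr_fun measurableSet_Ioc hptwise, ← hswap]
    refine tsum_congr fun k => ?_
    rw [← intervalIntegral.integral_of_le ht.le, hF]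
    simp only []
    rw [intervalIntegral.integral_const_mul, hJ k]
  have hterm : ∀ k : ℕ, (-(c^ν) * (1/Real.Gamma ν)) * (Cf k * (t^(ν*(k:ℕ)+ν) *
      (Real.Gamma (ν*(k:ℕ)+1) * Real.Gamma ν / Real.Gamma (ν*(k:ℕ)+1+ν)))) = N₀ * a (k+1) := by
    intro k
    have hΓ1 : Real.Gamma (ν*(k:ℕ)+1) ≠ 0 := (Real.Gamma_pos_of_pos (by positivity)).ne'
    have hΓ2 : Real.Gamma (ν*(k:ℕ)+1+ν) ≠ 0 := (Real.Gamma_pos_of_pos (by positivity)).ne'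
    have e1 : (ν * ((k:ℝ)+1) + 1) = ν*(k:ℕ)+1+ν := by push_cast; ring
    have e2 : (c*t) ^ (ν*((k:ℝ)+1)) = c^(ν*(k:ℕ)) * t^(ν*(k:ℕ)) * (c^ν * t^ν) := by
      rw [Real.mul_rpow hc.le ht.le, show ν*((k:ℝ)+1) = ν*(k:ℕ)+ν from by push_cast; ring,
        Real.rpow_add hc, Real.rpow_add ht]
      ring
    have e3 : t^(ν*(k:ℕ)+ν) = t^(ν*(k:ℕ)) * t^ν := Real.rpow_add ht _ _
    rw [ha, hCf]
    simp only []
    push_cast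
    rw [e1, e2, e3, pow_succ]
    field_simp
  have hshift : (∑' k : ℕ, a (k+1)) = (∑' k, a k) - 1 := by
    have hs0 := Summable.tsum_eq_zero_add hsum_a
    have ha0 : a 0 = 1 := by
      rw [ha]
      norm_num [Real.Gamma_one]
    rw [ha0] at hs0
    rw [hs0]; ring
  have hr : -(c^ν) * rlInt ν N t = N₀ * ((∑' k, a k) - 1) := by
    rw [rlInt, hintN]
    calc -(c^ν) * (1/Real.Gamma ν * ∑' k : ℕ, Cf k * (t^(ν*(k:ℕ)+ν) *
            (Real.Gamma (ν*(k:ℕ)+1) * Real.Gamma ν / Real.Gamma (ν*(k:ℕ)+1+ν))))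
        = ∑' k : ℕ, (-(c^ν) * (1/Real.Gamma ν)) * (Cf k * (t^(ν*(k:ℕ)+ν) *
            (Real.Gamma (ν*(k:ℕ)+1) * Real.Gamma ν / Real.Gamma (ν*(k:ℕ)+1+ν)))) := by
          rw [tsum_mul_left]; ring
      _ = ∑' k : ℕ, N₀ * a (k+1) := tsum_congr hterm
      _ = N₀ * ∑' k : ℕ, a (k+1) := tsum_mul_left
      _ = N₀ * ((∑' k, a k) - 1) := by rw [hshift]
  rw [hN t, hr]
  simp only [ha]
  ring
end
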